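/- Let λ ∈ ℂ with λ_i = Im λ > 0, and let f : ℝ → H be continuous on [b, +∞) with ∫_b^{∞} ‖f(s)‖² ds < ∞. Then the function u(t) = i ∫_t^{∞} e^{−iλ(t−s)} exp(i(t−s)A) f(s) ds is well defined and differentiable on [b, +∞) and satisfies i u'(t) + A u(t) = λ u(t) + f(t) for every t ≥ b; i.e., u solves the resolvent equation on the half-line [b, +∞) (part of the proof of Theorem 3.2). -/

import Mathlib

open MeasureTheory Set Complex
open scoped InnerProductSpace

/-- The operator exponential `exp(iτA)` for a bounded operator `A` and `τ ∈ ℝ`. -/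
noncomputable def expIA {H : Type*} [NormedAddCommGroup H] [InnerProductSpace ℂ H]
    [CompleteSpace H] (A : H →L[ℂ] H) (τ : ℝ) : H →L[ℂ] H :=
  NormedSpace.exp ((Complex.I * (τ : ℂ)) • A)

section helpers
variable {H : Type*} [NormedAddCommGroup H] [InnerProductSpace ℂ H] [CompleteSpace H]
  (A : H →L[ℂ] H)

noncomputable local instance : NormedAlgebra ℚ (H →L[ℂ] H) :=
  NormedAlgebra.restrictScalars ℚ ℂ _

lemma expIA_add (σ τ : ℝ) : expIA A (σ + τ) = expIA A σ * expIA A τ := by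
  unfold expIA
  have h : (Complex.I * ((σ + τ : ℝ) : ℂ)) • A
      = (Complex.I * (σ : ℂ)) • A + (Complex.I * (τ : ℂ)) • A := by
    push_cast; rw [mul_add, add_smul]
  rw [h]
  exact NormedSpace.exp_add_of_commute (((Commute.refl A).smul_left _).smul_right _)

lemma expIA_zero : expIA A 0 = 1 := by
  simp [expIA, NormedSpace.exp_zero]

lemma expIA_mul_neg (τ : ℝ) : expIA A τ * expIA A (-τ) = 1 := by
  rw [← expIA_add, add_neg_cancel, expIA_zero]

lemma expIA_mem_unitary (hA : IsSelfAdjoint A) (τ : ℝ) :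
    expIA A τ ∈ unitary (H →L[ℂ] H) := by
  apply NormedSpace.exp_mem_unitary_of_mem_skewAdjoint
  have h : (Complex.I * (τ : ℂ)) • A = ((τ : ℂ) * Complex.I) • A := by rw [mul_comm]
  rw [h]
  refine IsSelfAdjoint.smul_mem_skewAdjoint ?_ hA
  rw [skewAdjoint.mem_iff]
  simp [Complex.ext_iff]

lemma norm_expIA_apply (hA : IsSelfAdjoint A) (τ : ℝ) (x : H) :
    ‖expIA A τ x‖ = ‖x‖ :=
  ContinuousLinearMap.norm_map_of_mem_unitary (expIA_mem_unitary A hA τ) x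

lemma expIA_continuous : Continuous (fun τ : ℝ => expIA A τ) := by
  unfold expIA
  exact NormedSpace.exp_continuous.comp
    ((continuous_const.mul Complex.continuous_ofReal).smul continuous_const)

lemma hasDerivAt_expIA (t : ℝ) :
    HasDerivAt (fun τ : ℝ => expIA A τ) (Complex.I • (A * expIA A t)) t := by
  have key : ∀ τ : ℝ, expIA A τ = NormedSpace.exp (((τ : ℂ)) • (Complex.I • A)) := by
    intro τ; unfold expIA; rw [smul_smul, mul_comm]
  have h1 : HasDerivAt (fun z : ℂ => NormedSpace.exp (z • (Complex.I • A)))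
      ((Complex.I • A) * NormedSpace.exp (((t : ℂ)) • (Complex.I • A))) (t : ℝ) :=
    hasDerivAt_exp_smul_const' (Complex.I • A) ((t : ℝ) : ℂ)
  have h2 := HasDerivAt.scomp t h1 Complex.ofRealCLM.hasDerivAt
  simp only [Complex.ofRealCLM_apply, Complex.ofReal_one, one_smul, smul_mul_assoc] at h2
  have hfun : (fun τ : ℝ => expIA A τ)
      = (fun z : ℂ => NormedSpace.exp (z • (Complex.I • A))) ∘ Complex.ofReal := by
    funext τ; simp [Function.comp, key]
  rw [hfun, key t]
  exact h2
end helpers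

/-- For `Im λ > 0` and `f` continuous on `[b, ∞)` with `∫_b^∞ ‖f‖² < ∞`, the function
`u(t) = i ∫_t^∞ e^{−iλ(t−s)} exp(i(t−s)A) f(s) ds` is well defined and differentiable
on `[b, ∞)` and solves `i u' + A u = λ u + f` there (part of the proof of Theorem 3.2). -/


theorem resolvent_solution_right_halfline
    {H : Type*} [NormedAddCommGroup H] [InnerProductSpace ℂ H] [CompleteSpace H]
    (A : H →L[ℂ] H) (hA : IsSelfAdjoint A) (b : ℝ) (lam : ℂ) (hlam : 0 < lam.im)
    (f : ℝ → H) (hfc : ContinuousOn f (Set.Ici b))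
    (hfL2 : IntegrableOn (fun s : ℝ => ‖f s‖ ^ 2) (Set.Ici b) volume)
    (u : ℝ → H)
    (hu : u = fun t : ℝ => Complex.I • ∫ s in Set.Ioi t,
      Complex.exp (-Complex.I * lam * ((t : ℂ) - (s : ℂ))) • (expIA A (t - s)) (f s)) :
    (∀ t ∈ Set.Ici b,
      IntegrableOn (fun s : ℝ =>
        Complex.exp (-Complex.I * lam * ((t : ℂ) - (s : ℂ))) • (expIA A (t - s)) (f s))
        (Set.Ioi t) volume)
    ∧ ∃ u' : ℝ → H, ∀ t ∈ Set.Ici b,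
        HasDerivWithinAt u (u' t) (Set.Ici b) t
        ∧ Complex.I • u' t + A (u t) = lam • u t + f t := by
  set g : ℝ → H := fun s => Complex.exp (Complex.I * lam * (s : ℂ)) • (expIA A (-s)) (f s)
    with hg
  have hgnorm : ∀ s : ℝ, ‖g s‖ = Real.exp (-lam.im * s) * ‖f s‖ := by
    intro s
    simp only [hg, norm_smul, Complex.norm_exp,
      norm_expIA_apply A hA]
    congr 2
    simp [Complex.mul_re, Complex.mul_im]
  have hgcont : ContinuousOn g (Ici b) := by
    apply ContinuousOn.smul
    · exact (Complex.continuous_exp.comp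
        ((continuous_const.mul Complex.continuous_ofReal))).continuousOn
    · exact ContinuousOn.clm_apply
        ((expIA_continuous A).comp continuous_neg).continuousOn hfc
  have hIoisub : ∀ t ∈ Ici b, Ioi t ⊆ Ici b := fun t ht x hx => mem_Ici.2 (le_trans (mem_Ici.1 ht) (le_of_lt (mem_Ioi.1 hx)))
  have hgint : ∀ t ∈ Ici b, IntegrableOn g (Ioi t) volume := by
    intro t ht
    have hmeas : AEStronglyMeasurable g (volume.restrict (Ioi t)) :=
      (hgcont.mono (hIoisub t ht)).aestronglyMeasurable measurableSet_Ioi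
    have hφ : Integrable (fun s => (Real.exp (-(2 * lam.im) * s) + ‖f s‖ ^ 2) / 2)
        (volume.restrict (Ioi t)) := by
      apply Integrable.div_const
      exact (exp_neg_integrableOn_Ioi t (by positivity)).add (hfL2.mono_set (hIoisub t ht))
    refine Integrable.mono' hφ hmeas ?_
    refine Filter.Eventually.of_forall fun s => ?_
    rw [hgnorm s]
    have he : Real.exp (-(2 * lam.im) * s) = Real.exp (-lam.im * s) ^ 2 := by
      rw [sq, ← Real.exp_add]; congr 1; ring
    rw [he]
    nlinarith [sq_nonneg (Real.exp (-lam.im * s) - ‖f s‖)]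
  have hfact : ∀ t s : ℝ,
      Complex.exp (-Complex.I * lam * ((t : ℂ) - (s : ℂ))) • (expIA A (t - s)) (f s)
      = Complex.exp (-Complex.I * lam * (t : ℂ)) • (expIA A t) (g s) := by
    intro t s
    have hop : expIA A (t - s) = expIA A t * expIA A (-s) := by
      rw [← expIA_add, sub_eq_add_neg]
    simp only [hg, hop, ContinuousLinearMap.mul_apply, ContinuousLinearMap.map_smul,
      smul_smul, ← Complex.exp_add]
    congr 2
    ring
  have hint : ∀ t ∈ Set.Ici b,
      IntegrableOn (fun s : ℝ =>
        Complex.exp (-Complex.I * lam * ((t : ℂ) - (s : ℂ))) • (expIA A (t - s)) (f s))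
        (Set.Ioi t) volume := by
    intro t ht
    have heq : (fun s : ℝ =>
        Complex.exp (-Complex.I * lam * ((t : ℂ) - (s : ℂ))) • (expIA A (t - s)) (f s))
        = fun s => Complex.exp (-Complex.I * lam * (t : ℂ)) • (expIA A t) (g s) :=
      funext (hfact t)
    rw [heq]
    exact ((expIA A t).integrable_comp (hgint t ht)).smul _
  refine ⟨hint, ?_⟩
  set v : ℝ → H := fun t => ∫ s in Ioi t, g s with hv
  have hufact : ∀ t ∈ Ici b,
      u t = (Complex.I * Complex.exp (-Complex.I * lam * (t : ℂ))) •
        (expIA A t) (v t) := by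
    intro t ht
    rw [hu]
    simp only [funext (hfact t)]
    rw [integral_smul, ← ContinuousLinearMap.integral_comp_comm _ (hgint t ht), smul_smul]
  have hsplit : ∀ t ∈ Ici b, v t = v b - ∫ s in b..t, g s := by
    intro t ht
    have hIoc : IntegrableOn g (Ioc b t) volume :=
      (hgint b self_mem_Ici).mono_set Ioc_subset_Ioi_self
    have h2 : v b = (∫ s in Ioc b t, g s) + v t := by
      rw [hv]
      simp only
      rw [← setIntegral_union Ioc_disjoint_Ioi_same measurableSet_Ioi hIoc (hgint t ht),
        Ioc_union_Ioi_eq_Ioi ht]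
    rw [intervalIntegral.integral_of_le ht, h2]
    abel
  have hFTC : ∀ t ∈ Ici b,
      HasDerivWithinAt (fun t' => ∫ s in b..t', g s) (g t) (Ici b) t := by
    intro t ht
    have hii : IntervalIntegrable g volume b t := by
      apply ContinuousOn.intervalIntegrable
      apply hgcont.mono
      rw [uIcc_of_le ht]
      exact Icc_subset_Ici_self
    rcases eq_or_lt_of_le (mem_Ici.1 ht) with heq | hlt
    · subst heq
      have hmeas : StronglyMeasurableAtFilter g (nhdsWithin b (Ioi b)) volume :=
        ⟨Ici b, Filter.mem_of_superset self_mem_nhdsWithin Ioi_subset_Ici_self,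
          hgcont.aestronglyMeasurable measurableSet_Ici⟩
      have hcw : ContinuousWithinAt g (Ioi b) b :=
        (hgcont b self_mem_Ici).mono Ioi_subset_Ici_self
      exact intervalIntegral.integral_hasDerivWithinAt_right hii hmeas hcw
    · have hmeas : StronglyMeasurableAtFilter g (nhds t) volume :=
        ⟨Ici b, Ici_mem_nhds hlt, hgcont.aestronglyMeasurable measurableSet_Ici⟩
      have hca : ContinuousAt g t :=
        (hgcont t (le_of_lt hlt)).continuousAt (Ici_mem_nhds hlt)
      exact (intervalIntegral.integral_hasDerivAt_right hii hmeas hca).hasDerivWithinAt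
  have hv' : ∀ t ∈ Ici b, HasDerivWithinAt v (-(g t)) (Ici b) t := by
    intro t ht
    have h1 : HasDerivWithinAt (fun t' => v b - ∫ s in b..t', g s) (-(g t)) (Ici b) t :=
      (hFTC t ht).const_sub (v b)
    exact h1.congr (fun x hx => hsplit x hx) (hsplit t ht)
  have hEg : ∀ t : ℝ, Complex.exp (-Complex.I * lam * (t : ℂ)) • (expIA A t) (g t)
      = f t := by
    intro t
    have h1 : -Complex.I * lam * (t : ℂ) + Complex.I * lam * (t : ℂ) = 0 := by ring
    rw [hg]
    simp only
    rw [ContinuousLinearMap.map_smul, smul_smul, ← Complex.exp_add, h1,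
      Complex.exp_zero, one_smul, ← ContinuousLinearMap.mul_apply, expIA_mul_neg,
      ContinuousLinearMap.one_apply]
  refine ⟨fun t => Complex.I •
      (Complex.exp (-Complex.I * lam * (t : ℂ)) •
        ((Complex.I • (A * expIA A t)) (v t) + (expIA A t) (-(g t)))
      + (-Complex.I * lam * Complex.exp (-Complex.I * lam * (t : ℂ))) •
        (expIA A t) (v t)), fun t ht => ?_⟩
  have hsc : HasDerivAt (fun τ : ℝ => Complex.exp (-Complex.I * lam * (τ : ℂ)))
      (-Complex.I * lam * Complex.exp (-Complex.I * lam * (t : ℂ))) t := by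
    have h2 : HasDerivAt (fun z : ℂ => Complex.exp (-Complex.I * lam * z))
        (-Complex.I * lam * Complex.exp (-Complex.I * lam * ((t : ℝ) : ℂ))) ((t : ℝ) : ℂ) := by
      have h0 : HasDerivAt (fun z : ℂ => -Complex.I * lam * z) (-Complex.I * lam)
          ((t : ℝ) : ℂ) := by
        simpa using (hasDerivAt_id (((t : ℝ) : ℂ))).const_mul (-Complex.I * lam)
      have h1 := (Complex.hasDerivAt_exp (-Complex.I * lam * ((t : ℝ) : ℂ))).comp
        ((t : ℝ) : ℂ) h0
      have hfn : (fun z : ℂ => Complex.exp (-Complex.I * lam * z))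
          = Complex.exp ∘ (fun z : ℂ => -Complex.I * lam * z) := rfl
      rw [hfn]
      rw [show -Complex.I * lam * Complex.exp (-Complex.I * lam * ((t : ℝ) : ℂ))
          = Complex.exp (-Complex.I * lam * ((t : ℝ) : ℂ)) * (-Complex.I * lam) by ring]
      exact h1
    exact h2.comp_ofReal
  have hE' : HasDerivAt (fun τ : ℝ => (expIA A τ).restrictScalars ℝ)
      ((ContinuousLinearMap.restrictScalarsL ℂ H H ℝ ℝ)
        (Complex.I • (A * expIA A t))) t :=
    (ContinuousLinearMap.restrictScalarsL ℂ H H ℝ ℝ).hasFDerivAt.comp_hasDerivAt t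
      (hasDerivAt_expIA A t)
  have hEv := hE'.hasDerivWithinAt.clm_apply (hv' t ht)
  have hP := hsc.hasDerivWithinAt.smul hEv
  constructor
  · refine (hP.const_smul Complex.I).congr (fun x hx => ?_) ?_
    · rw [hufact x hx, Pi.smul_apply, Pi.smul_apply', smul_smul]
      rw [ContinuousLinearMap.coe_restrictScalars']
    · rw [hufact t ht, Pi.smul_apply, Pi.smul_apply', smul_smul]
      rw [ContinuousLinearMap.coe_restrictScalars']
  rw [hufact t ht, ← hEg t]
  simp only [ContinuousLinearMap.coe_restrict_scalarsL', ContinuousLinearMap.coe_restrictScalars']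
  simp only [ContinuousLinearMap.smul_apply, ContinuousLinearMap.mul_apply, map_neg,
    ContinuousLinearMap.map_smul, smul_add, smul_neg, smul_smul]
  match_scalars
  · linear_combination (Complex.I * Complex.exp (-Complex.I * lam * (t : ℂ))) * Complex.I_sq
  · linear_combination (-Complex.exp (-Complex.I * lam * (t : ℂ))) * Complex.I_sq
  · linear_combination (-Complex.I * lam * Complex.exp (-Complex.I * lam * (t : ℂ))) *
      Complex.I_sq
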